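/- Let e_n(x) = e·(1 + Σ_{k=1}^n (-1)^k f_k x^k) with f_k = (-1)^k e_k > 0 strictly decreasing, where e_k are the Maclaurin coefficients of (1+x)^{1/x}/e. For fixed x ∈ (-1, 0), the partial sums are strictly increasing in n and all lie below e(x): e₀(x) < e₁(x) < e₂(x) < ⋯ < e(x). -/

import Mathlib

open Real Filter Finset

noncomputable def aa : ℕ → ℝ
  | 0 => 1
  | n+1 => (∑ j ∈ (Finset.range (n+1)).attach,
      (((n:ℝ) + 1 - j.1) / ((n:ℝ) + 2 - j.1)) * aa j.1) / (n+1)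
  decreasing_by exact Finset.mem_range.mp j.2

lemma aa_zero : aa 0 = 1 := by rw [aa]

lemma aa_succ (n : ℕ) : aa (n+1) = (∑ j ∈ Finset.range (n+1),
    (((n:ℝ) + 1 - j) / ((n:ℝ) + 2 - j)) * aa j) / (n+1) := by
  rw [aa, ← Finset.sum_attach (Finset.range (n+1)) (fun j => (((n:ℝ) + 1 - j) / ((n:ℝ) + 2 - j)) * aa j)]

lemma aa_rec (n : ℕ) : ((n:ℝ)+1) * aa (n+1) =
    ∑ j ∈ Finset.range (n+1), (((n:ℝ)+1-j)/((n:ℝ)+2-j)) * aa j := by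
  rw [aa_succ]
  field_simp

lemma aa_pos : ∀ n, 0 < aa n := by
  intro n
  induction n using Nat.strong_induction_on with
  | _ n ih =>
    match n with
    | 0 => rw [aa_zero]; norm_num
    | n+1 =>
      rw [aa_succ]
      apply div_pos _ (by positivity)
      apply Finset.sum_pos _ ⟨0, Finset.mem_range.mpr n.succ_pos⟩
      intro j hj
      have hj' : (j:ℝ) ≤ n := by exact_mod_cast Nat.lt_succ_iff.mp (Finset.mem_range.mp hj)
      exact mul_pos (div_pos (by linarith) (by linarith)) (ih j (Finset.mem_range.mp hj))

lemma aa_le_one : ∀ n, aa n ≤ 1 := by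
  intro n
  induction n using Nat.strong_induction_on with
  | _ n ih =>
    match n with
    | 0 => rw [aa_zero]
    | n+1 =>
      rw [aa_succ, div_le_one (by positivity)]
      calc ∑ j ∈ Finset.range (n+1), (((n:ℝ)+1-j)/((n:ℝ)+2-j)) * aa j
          ≤ ∑ j ∈ Finset.range (n+1), 1 := by
            apply Finset.sum_le_sum
            intro j hj
            have hj' : (j:ℝ) ≤ n := by exact_mod_cast Nat.lt_succ_iff.mp (Finset.mem_range.mp hj)
            have h1 : ((n:ℝ)+1-j)/((n:ℝ)+2-j) ≤ 1 := by
              rw [div_le_one (by linarith)]; linarith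
            have h2 : 0 ≤ ((n:ℝ)+1-j)/((n:ℝ)+2-j) := div_nonneg (by linarith) (by linarith)
            calc (((n:ℝ)+1-j)/((n:ℝ)+2-j)) * aa j ≤ 1 * 1 :=
                mul_le_mul h1 (ih j (Finset.mem_range.mp hj)) (aa_pos j).le (by norm_num)
              _ = 1 := by norm_num
        _ = (n:ℝ)+1 := by simp
        _ ≤ (n:ℝ)+1 := le_refl _

noncomputable def PP (w : ℝ) : ℝ := ∑' k : ℕ, aa k * w ^ k
noncomputable def HH (w : ℝ) : ℝ := ∑' k : ℕ, w ^ (k+1) / ((k:ℝ)+2)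

lemma aa_abs_le (n : ℕ) : |aa n| ≤ 1 := by
  rw [abs_of_pos (aa_pos n)]; exact aa_le_one n

lemma summable_norm_aa {w : ℝ} (hw : |w| < 1) :
    Summable fun k : ℕ => ‖aa k * w ^ k‖ := by
  refine Summable.of_nonneg_of_le (fun k => norm_nonneg _) (fun k => ?_)
    (summable_geometric_of_lt_one (abs_nonneg w) hw)
  rw [norm_mul, norm_pow, Real.norm_eq_abs, Real.norm_eq_abs]
  exact mul_le_of_le_one_left (by positivity) (aa_abs_le k)

lemma summable_norm_cc {w : ℝ} (hw : |w| < 1) :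
    Summable fun k : ℕ => ‖((k:ℝ)+1) * w ^ k / ((k:ℝ)+2)‖ := by
  refine Summable.of_nonneg_of_le (fun k => norm_nonneg _) (fun k => ?_)
    (summable_geometric_of_lt_one (abs_nonneg w) hw)
  rw [Real.norm_eq_abs, abs_div, abs_mul, abs_pow]
  rw [abs_of_nonneg (by positivity : (0:ℝ) ≤ (k:ℝ)+1),
    abs_of_nonneg (by positivity : (0:ℝ) ≤ (k:ℝ)+2), div_le_iff₀ (by positivity)]
  nlinarith [pow_nonneg (abs_nonneg w) k]

lemma summable_ku {r : ℝ} (h0 : 0 ≤ r) (h1 : r < 1) :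
    Summable fun k : ℕ => (k:ℝ) * r ^ (k-1) := by
  rw [← summable_nat_add_iff 1]
  have h1' : Summable (fun n : ℕ => (n:ℝ) * r ^ n) := by
    simpa using summable_pow_mul_geometric_of_norm_lt_one 1
      (by rwa [Real.norm_eq_abs, abs_of_nonneg h0])
  have h2 : Summable (fun n : ℕ => r ^ n) := summable_geometric_of_lt_one h0 h1
  refine (h1'.add h2).congr fun k => ?_
  push_cast [Nat.add_sub_cancel]
  ring

lemma hasDerivAt_PP {r : ℝ} (hr0 : 0 < r) (hr1 : r < 1) {w : ℝ} (hw : w ∈ Set.Ioo (-r) r) :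
    HasDerivAt PP (∑' k : ℕ, aa k * ((k:ℝ) * w ^ (k-1))) w := by
  have h0 : (0:ℝ) ∈ Set.Ioo (-r) r := by constructor <;> simp [hr0] <;> linarith
  exact hasDerivAt_tsum_of_isPreconnected (u := fun k : ℕ => (k:ℝ) * r ^ (k-1))
    (summable_ku hr0.le hr1) isOpen_Ioo (convex_Ioo _ _).isPreconnected
    (fun n y _ => (hasDerivAt_pow n y).const_mul (aa n))
    (fun n y hy => by
      have hyr : |y| ≤ r := by
        rw [abs_le]; exact ⟨hy.1.le, hy.2.le⟩
      rw [Real.norm_eq_abs, abs_mul, abs_mul, Nat.abs_cast, abs_pow]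
      calc |aa n| * ((n:ℝ) * |y| ^ (n-1)) ≤ 1 * ((n:ℝ) * r ^ (n-1)) := by
            apply mul_le_mul (aa_abs_le n) _ (by positivity) zero_le_one
            exact mul_le_mul_of_nonneg_left (pow_le_pow_left₀ (abs_nonneg y) hyr _) (Nat.cast_nonneg n)
        _ = (n:ℝ) * r ^ (n-1) := one_mul _)
    h0
    (by
      refine summable_of_ne_finset_zero (s := {0}) fun b hb => ?_
      simp only [Finset.mem_singleton] at hb
      simp [zero_pow hb])
    hw

lemma hasDerivAt_HH {r : ℝ} (hr0 : 0 < r) (hr1 : r < 1) {w : ℝ} (hw : w ∈ Set.Ioo (-r) r) :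
    HasDerivAt HH (∑' k : ℕ, ((k:ℝ)+1) * w ^ k / ((k:ℝ)+2)) w := by
  have h0 : (0:ℝ) ∈ Set.Ioo (-r) r := by constructor <;> simp [hr0] <;> linarith
  have hder : ∀ (n : ℕ) (y : ℝ), HasDerivAt (fun y : ℝ => y ^ (n+1) / ((n:ℝ)+2))
      (((n:ℝ)+1) * y ^ n / ((n:ℝ)+2)) y := by
    intro n y
    have := (hasDerivAt_pow (n+1) y).div_const ((n:ℝ)+2)
    simpa using this
  exact hasDerivAt_tsum_of_isPreconnected (u := fun k : ℕ => r ^ k)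
    (summable_geometric_of_lt_one hr0.le hr1) isOpen_Ioo (convex_Ioo _ _).isPreconnected
    (fun n y _ => hder n y)
    (fun n y hy => by
      have hyr : |y| ≤ r := by
        rw [abs_le]; exact ⟨hy.1.le, hy.2.le⟩
      rw [Real.norm_eq_abs, abs_div, abs_mul, abs_pow]
      rw [abs_of_nonneg (by positivity : (0:ℝ) ≤ (n:ℝ)+1),
        abs_of_nonneg (by positivity : (0:ℝ) ≤ (n:ℝ)+2), div_le_iff₀ (by positivity)]
      have h1 : |y| ^ n ≤ r ^ n := pow_le_pow_left₀ (abs_nonneg y) hyr _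
      have h2 : (0:ℝ) ≤ |y| ^ n := by positivity
      have h3 : (0:ℝ) ≤ r ^ n := by positivity
      nlinarith)
    h0
    (by
      refine summable_of_ne_finset_zero (s := ∅) fun b _ => ?_
      simp)
    hw

lemma deriv_identity {w : ℝ} (hw : |w| < 1) :
    ∑' k : ℕ, aa k * ((k:ℝ) * w ^ (k-1)) =
      PP w * ∑' k : ℕ, ((k:ℝ)+1) * w ^ k / ((k:ℝ)+2) := by
  have hs : Summable fun k : ℕ => aa k * ((k:ℝ) * w ^ (k-1)) := by
    apply Summable.of_norm
    refine Summable.of_nonneg_of_le (fun k => norm_nonneg _) (fun k => ?_)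
      (summable_ku (abs_nonneg w) hw)
    rw [Real.norm_eq_abs, abs_mul, abs_mul, Nat.abs_cast, abs_pow]
    calc |aa k| * ((k:ℝ) * |w| ^ (k-1)) ≤ 1 * ((k:ℝ) * |w| ^ (k-1)) :=
          mul_le_mul_of_nonneg_right (aa_abs_le k) (by positivity)
      _ = (k:ℝ) * |w| ^ (k-1) := one_mul _
  rw [PP, tsum_mul_tsum_eq_tsum_sum_range_of_summable_norm (summable_norm_aa hw)
    (summable_norm_cc hw)]
  rw [Summable.tsum_eq_zero_add hs]
  simp only [Nat.cast_zero, zero_mul, mul_zero, zero_add]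
  refine tsum_congr fun n => ?_
  have hsum : ∑ k ∈ Finset.range (n+1), aa k * w ^ k * ((((n-k:ℕ):ℝ)+1) * w ^ (n-k) / (((n-k:ℕ):ℝ)+2))
      = (((n:ℝ)+1) * aa (n+1)) * w ^ n := by
    rw [aa_rec, Finset.sum_mul]
    refine Finset.sum_congr rfl fun j hj => ?_
    have hjn : j ≤ n := Nat.lt_succ_iff.mp (Finset.mem_range.mp hj)
    have hc : ((n-j:ℕ):ℝ) = (n:ℝ) - (j:ℝ) := by
      push_cast [Nat.cast_sub hjn]; ring
    have hpow : w ^ j * w ^ (n-j) = w ^ n := by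
      rw [← pow_add, Nat.add_sub_cancel' hjn]
    rw [hc]
    field_simp
    rw [← hpow]
    ring
  rw [hsum]
  push_cast [Nat.add_sub_cancel]
  ring

lemma hasSum_aa_exp {z : ℝ} (hz : |z| < 1) :
    HasSum (fun k : ℕ => aa k * z ^ k) (Real.exp (HH z)) := by
  set r := (|z|+1)/2 with hr
  have hr0 : 0 < r := by positivity
  have hr1 : r < 1 := by rw [hr]; linarith
  have hzr : |z| < r := by rw [hr]; linarith [abs_nonneg z]
  have hzmem : z ∈ Set.Ioo (-r) r := by
    rcases abs_lt.mp hzr with ⟨h1, h2⟩; exact ⟨h1, h2⟩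
  have h0mem : (0:ℝ) ∈ Set.Ioo (-r) r := ⟨by linarith, hr0⟩
  have hmem1 : ∀ w ∈ Set.Ioo (-r) r, |w| < 1 := by
    intro w hw
    rw [abs_lt]
    exact ⟨by linarith [hw.1], by linarith [hw.2]⟩
  have hG : ∀ w ∈ Set.Ioo (-r) r,
      HasDerivAt (fun w => PP w * Real.exp (-HH w)) 0 w := by
    intro w hw
    have h1 := hasDerivAt_PP hr0 hr1 hw
    have h2 := ((hasDerivAt_HH hr0 hr1 hw).neg).exp
    have h3 := h1.mul h2
    convert h3 using 1
    · rfl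
    · rfl
    · rfl
    rw [deriv_identity (hmem1 w hw)]
    ring
  have hconst : PP z * Real.exp (-HH z) = PP 0 * Real.exp (-HH 0) := by
    refine Convex.is_const_of_fderivWithin_eq_zero (convex_Ioo (-r) r)
      (fun w hw => ((hG w hw).differentiableAt).differentiableWithinAt)
      (fun w hw => ?_) hzmem h0mem
    rw [fderivWithin_of_isOpen isOpen_Ioo hw, ((hG w hw).hasFDerivAt).fderiv]
    ext v
    simp
  have hPP0 : PP 0 = 1 := by
    rw [PP, tsum_eq_single 0 (fun b hb => by simp [zero_pow hb])]
    simp [aa_zero]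
  have hHH0 : HH 0 = 0 := by
    rw [HH]
    have : (fun k : ℕ => (0:ℝ) ^ (k+1) / ((k:ℝ)+2)) = fun _ => 0 := by
      funext k; simp
    rw [this, tsum_zero]
  rw [hPP0, hHH0] at hconst
  simp only [neg_zero, Real.exp_zero, mul_one, one_mul] at hconst
  rw [Real.exp_neg, mul_inv_eq_one₀ (Real.exp_ne_zero _)] at hconst
  have hsum : Summable fun k : ℕ => aa k * z ^ k := (summable_norm_aa hz).of_norm
  have := hsum.hasSum
  rwa [show ∑' k : ℕ, aa k * z ^ k = Real.exp (HH z) from hconst] at this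

lemma HH_closed {z : ℝ} (hz : |z| < 1) (h0 : z ≠ 0) :
    HH z = (-Real.log (1-z) - z)/z := by
  have h := hasSum_pow_div_log_of_abs_lt_one hz
  have h2 : HasSum (fun n : ℕ => z ^ ((n+1)+1) / (((n+1:ℕ):ℝ)+1)) (-Real.log (1-z) - z) := by
    refine (hasSum_nat_add_iff (f := fun n : ℕ => z ^ (n+1) / ((n:ℝ)+1)) 1
      (g := -Real.log (1-z) - z)).mpr ?_
    convert h using 1
    · rfl
    simp
  have h3 : HasSum (fun n : ℕ => z ^ (n+1) / ((n:ℝ)+2)) ((-Real.log (1-z) - z)/z) := by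
    have h4 := h2.mul_left z⁻¹
    have heq : (fun n : ℕ => z⁻¹ * (z ^ ((n+1)+1) / (((n+1:ℕ):ℝ)+1))) =
        fun n : ℕ => z ^ (n+1) / ((n:ℝ)+2) := by
      funext n
      rw [pow_succ]
      push_cast
      field_simp
      ring
    rw [heq] at h4
    convert h4 using 1
    · rfl
    rw [inv_mul_eq_div]
  rw [HH]
  exact h3.tsum_eq

/-- `(1+x)^{1/x}` extended by `e` at `0`. -/
noncomputable def eFun (x : ℝ) : ℝ :=
  if x = 0 then Real.exp 1 else Real.exp (Real.log (1 + x) / x)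

lemma exp_HH_neg {x : ℝ} (hx : x ∈ Set.Ioo (-1 : ℝ) 1) :
    Real.exp (HH (-x)) = eFun x / Real.exp 1 := by
  rcases eq_or_ne x 0 with h0 | h0
  · subst h0
    have : HH (-(0:ℝ)) = 0 := by
      rw [neg_zero, HH]
      have : (fun k : ℕ => (0:ℝ) ^ (k+1) / ((k:ℝ)+2)) = fun _ => 0 := by
        funext k; simp
      rw [this, tsum_zero]
    rw [this, Real.exp_zero, eFun, if_pos rfl, div_self (Real.exp_ne_zero 1)]
  · have habs : |(-x)| < 1 := by
      rw [abs_neg, abs_lt]; exact ⟨hx.1, hx.2⟩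
    have hne : -x ≠ 0 := neg_ne_zero.mpr h0
    rw [HH_closed habs hne]
    have h1 : 1 - (-x) = 1 + x := by ring
    rw [h1]
    have h2 : (-Real.log (1+x) - -x) / (-x) = Real.log (1+x) / x - 1 := by
      field_simp
      ring
    rw [h2, Real.exp_sub, eFun, if_neg h0]

lemma hasSum_signed_aa {x : ℝ} (hx : x ∈ Set.Ioo (-1 : ℝ) 1) :
    HasSum (fun k : ℕ => ((-1:ℝ)^k * aa k) * x ^ k) (eFun x / Real.exp 1) := by
  have habs : |(-x)| < 1 := by
    rw [abs_neg, abs_lt]; exact ⟨hx.1, hx.2⟩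
  have h := hasSum_aa_exp habs
  rw [exp_HH_neg hx] at h
  convert h using 2 with k
  rw [neg_pow]
  ring

open NNReal in
lemma hasFPowerSeriesAt_of_hasSum {c : ℕ → ℝ} {f : ℝ → ℝ}
    (hc : ∀ x ∈ Set.Ioo (-1 : ℝ) 1, HasSum (fun k : ℕ => c k * x ^ k) (f x)) :
    HasFPowerSeriesAt f (FormalMultilinearSeries.ofScalars ℝ c) 0 := by
  have hrad : ((1/2 : ℝ≥0) : ENNReal) ≤ (FormalMultilinearSeries.ofScalars ℝ c).radius := by
    have h34 : Summable (fun k : ℕ => c k * (3/4 : ℝ) ^ k) :=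
      (hc (3/4) (by norm_num)).summable
    have htend := h34.tendsto_atTop_zero
    have habs : Filter.Tendsto (fun n : ℕ =>
        ‖FormalMultilinearSeries.ofScalars ℝ c n‖ * ((3/4 : ℝ≥0) : ℝ) ^ n) atTop (nhds 0) := by
      have h2 := htend.abs
      rw [abs_zero] at h2
      refine h2.congr fun n => ?_
      rw [abs_mul, abs_pow, FormalMultilinearSeries.ofScalars_norm]
      norm_num
    refine le_trans ?_ (FormalMultilinearSeries.le_radius_of_tendsto _ habs)
    rw [ENNReal.coe_le_coe]
    rw [← NNReal.coe_le_coe]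
    norm_num
  refine ⟨((1/2 : ℝ≥0) : ENNReal), hrad, by norm_num, ?_⟩
  intro z hz
  have hz' : |z| < 1 := by
    rw [EMetric.mem_ball, edist_zero_right] at hz
    have h1 : ‖z‖₊ < (1/2 : ℝ≥0) := by exact_mod_cast hz
    have h2 : ‖z‖ < 1/2 := h1
    rw [← Real.norm_eq_abs]
    linarith
  have hmem : z ∈ Set.Ioo (-1 : ℝ) 1 := by
    rcases abs_lt.mp hz' with ⟨ha, hb⟩
    exact ⟨ha, hb⟩
  have := hc z hmem
  simp only [zero_add]
  have heq : (fun n : ℕ => FormalMultilinearSeries.ofScalars ℝ c n fun _ => z) =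
      fun n : ℕ => c n * z ^ n := by
    funext n
    rw [FormalMultilinearSeries.ofScalars_apply_eq, smul_eq_mul]
  rw [heq]
  exact this

theorem partial_sums_increasing_on_neg (e : ℕ → ℝ)
    (he : ∀ x ∈ Set.Ioo (-1 : ℝ) 1, HasSum (fun k : ℕ => e k * x ^ k) (eFun x / Real.exp 1))
    (x : ℝ) (hx : x ∈ Set.Ioo (-1 : ℝ) 0)
    (en : ℕ → ℝ) (hen : ∀ n, en n = Real.exp 1 * ∑ k ∈ Finset.range (n + 1), e k * x ^ k) :
    StrictMono en ∧ ∀ n : ℕ, en n < eFun x := by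
  have hceq : e = fun k : ℕ => (-1:ℝ)^k * aa k := by
    have h1 := hasFPowerSeriesAt_of_hasSum he
    have h2 := hasFPowerSeriesAt_of_hasSum (fun z hz => hasSum_signed_aa hz)
    have h3 := h1.eq_formalMultilinearSeries h2
    exact FormalMultilinearSeries.ofScalars_series_injective ℝ ℝ h3
  obtain ⟨hx1, hx2⟩ := hx
  have hterm : ∀ k : ℕ, 0 < e k * x ^ k := by
    intro k
    rw [hceq]
    have h : (-1:ℝ)^k * aa k * x^k = aa k * (-x)^k := by rw [neg_pow]; ring
    rw [h]
    exact mul_pos (aa_pos k) (pow_pos (by linarith) k)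
  constructor
  · apply strictMono_nat_of_lt_succ
    intro n
    rw [hen, hen, Finset.sum_range_succ (n := n+1)]
    have h := hterm (n+1)
    have he1 := Real.exp_pos 1
    nlinarith
  · intro n
    have hsum := he x ⟨hx1, by linarith⟩
    have hlt : ∑ k ∈ Finset.range (n+1), e k * x^k < eFun x / Real.exp 1 := by
      calc ∑ k ∈ Finset.range (n+1), e k * x^k
          < ∑ k ∈ Finset.range (n+2), e k * x^k := by
            rw [Finset.sum_range_succ (n := n+1)]
            linarith [hterm (n+1)]
        _ ≤ eFun x / Real.exp 1 :=
            (Summable.sum_le_tsum _ (fun i _ => (hterm i).le) hsum.summable).trans_eq hsum.tsum_eq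
    rw [hen]
    have he1 := Real.exp_pos 1
    calc Real.exp 1 * ∑ k ∈ Finset.range (n+1), e k * x^k
        < Real.exp 1 * (eFun x / Real.exp 1) := mul_lt_mul_of_pos_left hlt he1
      _ = eFun x := by field_simp
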